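/- Let g : [0,∞) → ℝ be continuous, strictly positive and monotone increasing, and suppose the improper integral T⁺ = ∫₀^∞ dσ/g(σ) is finite. Then the Cauchy problem ω′(t) = g(ω(t)), ω(0) = 0 has a monotone increasing solution ω⁺ : [0,T⁺) → [0,∞); the iterates ω₀ = 0, ω_n(t) = ∫₀ᵗ g(ω_{n−1}(s)) ds converge to ω⁺(t) for every t ∈ [0,T⁺); and ω⁺(t) → ∞ as t → T⁺ (the solution blows up at the finite time T⁺). -/

import Mathlib

open Set Filter MeasureTheory intervalIntegral
open scoped Topology

theorem stmt_2
    (g : ℝ → ℝ)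
    (hgc : ContinuousOn g (Set.Ici 0))
    (hgpos : ∀ x ∈ Set.Ici (0:ℝ), 0 < g x)
    (hgm : MonotoneOn g (Set.Ici 0))
    (Tplus : ℝ)
    (hT : Filter.Tendsto (fun ω => ∫ σ in (0:ℝ)..ω, 1 / g σ)
      Filter.atTop (nhds Tplus))
    (ωseq : ℕ → ℝ → ℝ) (hω0 : ωseq 0 = fun _ => 0)
    (hωrec : ∀ n t, ωseq (n + 1) t = ∫ s in (0:ℝ)..t, g (ωseq n s)) :
    ∃ ωp : ℝ → ℝ,
      MonotoneOn ωp (Set.Ico 0 Tplus) ∧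
      (∀ t ∈ Set.Ico 0 Tplus, 0 ≤ ωp t) ∧
      ωp 0 = 0 ∧
      (∀ t ∈ Set.Ico 0 Tplus, HasDerivWithinAt ωp (g (ωp t)) (Set.Ico 0 Tplus) t) ∧
      (∀ t ∈ Set.Ico 0 Tplus,
        Filter.Tendsto (fun n => ωseq n t) Filter.atTop (nhds (ωp t))) ∧
      Filter.Tendsto ωp (nhdsWithin Tplus (Set.Iio Tplus)) Filter.atTop := by
  classical
  -- the extension of `g` to all of `ℝ`
  set G : ℝ → ℝ := fun σ => g (max σ 0) with hGdef
  have hGc : Continuous G :=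
    hgc.comp_continuous (continuous_id.max continuous_const) fun x => Set.mem_Ici.2 (le_max_right _ _)
  have hGpos : ∀ x, 0 < G x := fun x => hgpos _ (Set.mem_Ici.2 (le_max_right _ _))
  have hGm : Monotone G := fun a b hab =>
    hgm (Set.mem_Ici.2 (le_max_right _ _)) (Set.mem_Ici.2 (le_max_right _ _)) (max_le_max hab le_rfl)
  have hGg : ∀ x, 0 ≤ x → G x = g x := fun x hx => by
    simp [hGdef, max_eq_left hx]
  have h1Gc : Continuous fun σ => 1 / G σ :=
    continuous_const.div hGc fun x => (hGpos x).ne'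
  set F : ℝ → ℝ := fun ω => ∫ σ in (0:ℝ)..ω, 1 / G σ with hFdef
  have hFderiv : ∀ ω, HasDerivAt F (1 / G ω) ω := fun ω =>
    intervalIntegral.integral_hasDerivAt_right (h1Gc.intervalIntegrable _ _)
      h1Gc.aestronglyMeasurable.stronglyMeasurableAtFilter h1Gc.continuousAt
  have hFc : Continuous F := continuous_iff_continuousAt.2 fun ω => (hFderiv ω).continuousAt
  have hFsm : StrictMono F := by
    apply strictMono_of_deriv_pos
    intro x
    rw [(hFderiv x).deriv]
    exact one_div_pos.2 (hGpos x)
  have hF0 : F 0 = 0 := intervalIntegral.integral_same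
  -- F agrees with the given integral for ω ≥ 0
  have hFeq : ∀ ω, 0 ≤ ω → F ω = ∫ σ in (0:ℝ)..ω, 1 / g σ := by
    intro ω hω
    refine intervalIntegral.integral_congr fun σ hσ => ?_
    rw [uIcc_of_le hω] at hσ
    rw [hGg σ hσ.1]
  have hT' : Tendsto F atTop (𝓝 Tplus) := by
    refine hT.congr' ?_
    filter_upwards [eventually_ge_atTop (0:ℝ)] with ω hω
    exact (hFeq ω hω).symm
  have hFle : ∀ ω, F ω ≤ Tplus := hFsm.monotone.ge_of_tendsto hT'
  have hFlt : ∀ ω, F ω < Tplus := fun ω => lt_of_lt_of_le (hFsm (lt_add_one ω)) (hFle _)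
  have hTpos : 0 < Tplus := hF0 ▸ hFlt 0
  -- F is `ω / g 0` for ω ≤ 0
  have hFneg : ∀ ω, ω ≤ 0 → F ω = ω * (1 / g 0) := by
    intro ω hω
    have : F ω = ∫ _σ in (0:ℝ)..ω, 1 / g 0 := by
      refine intervalIntegral.integral_congr fun σ hσ => ?_
      rw [uIcc_of_ge hω] at hσ
      have : max σ 0 = 0 := max_eq_right hσ.2
      simp [hGdef, this]
    rw [this, intervalIntegral.integral_const, smul_eq_mul, sub_zero]
  -- surjectivity of F onto Iio Tplus
  have hsurj : ∀ t, t < Tplus → ∃ ω, F ω = t := by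
    intro t ht
    obtain ⟨b, hb⟩ : ∃ b, t ≤ F b := by
      rcases (hT'.eventually (eventually_gt_nhds ht)).exists with ⟨b, hb⟩
      exact ⟨b, hb.le⟩
    set a := min 0 (t * g 0) with ha
    have ha0 : a ≤ 0 := min_le_left _ _
    have haF : F a ≤ t := by
      rw [hFneg a ha0]
      have hg0 : 0 < g 0 := hgpos 0 (Set.mem_Ici.2 le_rfl)
      rcases le_or_gt 0 t with h | h
      · have : a * (1 / g 0) ≤ 0 := by
          apply mul_nonpos_of_nonpos_of_nonneg ha0 (by positivity)
        linarith
      · have : a ≤ t * g 0 := min_le_right _ _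
        calc a * (1 / g 0) ≤ t * g 0 * (1 / g 0) := by
              apply mul_le_mul_of_nonneg_right this (by positivity)
          _ = t := by field_simp
    rcases le_or_gt a b with hab | hab
    · have := intermediate_value_Icc hab hFc.continuousOn
      rcases this ⟨haF, hb⟩ with ⟨ω, _, hω⟩
      exact ⟨ω, hω⟩
    · exact ⟨a, le_antisymm haF (hb.trans (hFsm.monotone hab.le))⟩
  -- the inverse function
  set ωp : ℝ → ℝ := fun t => if h : ∃ ω, F ω = t then h.choose else 0 with hωpdef
  have hωpF : ∀ t, t < Tplus → F (ωp t) = t := by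
    intro t ht
    show F (if h : ∃ ω, F ω = t then h.choose else 0) = t
    rw [dif_pos (hsurj t ht)]
    exact (hsurj t ht).choose_spec
  have hωpF' : ∀ ω, ωp (F ω) = ω := fun ω => hFsm.injective (hωpF _ (hFlt ω))
  have hωp0 : ωp 0 = 0 := by have := hωpF' 0; rwa [hF0] at this
  have hωpmono : ∀ s t, s ≤ t → t < Tplus → ωp s ≤ ωp t := by
    intro s t hst ht
    have := hωpF t ht
    have h2 := hωpF s (lt_of_le_of_lt hst ht)
    exact hFsm.le_iff_le.1 (by rw [this, h2]; exact hst)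
  have hωpnn : ∀ t, 0 ≤ t → t < Tplus → 0 ≤ ωp t := fun t h0 ht => hωp0 ▸ hωpmono 0 t h0 ht
  -- continuity of ωp on Iio Tplus
  have hωpc : ∀ t, t < Tplus → ContinuousAt ωp t := by
    intro t ht
    rw [ContinuousAt, tendsto_order]
    constructor
    · intro b hb
      have h1 : F b < t := by
        rw [← hωpF t ht]; exact hFsm hb
      filter_upwards [Ioo_mem_nhds h1 ht] with y hy
      exact hFsm.lt_iff_lt.1 (by rw [hωpF y hy.2]; exact hy.1)
    · intro b hb
      have h1 : t < F b := by
        rw [← hωpF t ht]; exact hFsm hb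
      filter_upwards [Iio_mem_nhds h1] with y hy
      exact hFsm.lt_iff_lt.1 (by rw [hωpF y (hy.trans (hFlt b))]; exact hy)
  -- derivative of ωp
  have hωpderiv : ∀ t, t < Tplus → HasDerivAt ωp (G (ωp t)) t := by
    intro t ht
    have h1 : HasDerivAt ωp (1 / G (ωp t))⁻¹ t := by
      refine HasDerivAt.of_local_left_inverse (hωpc t ht) (hFderiv (ωp t))
        (by exact (one_div_pos.2 (hGpos _)).ne') ?_
      filter_upwards [Iio_mem_nhds ht] with y hy
      exact hωpF y hy
    simpa [one_div, inv_inv] using h1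
  -- integral representation of ωp
  have hωpint : ∀ t, 0 ≤ t → t < Tplus → ωp t = ∫ s in (0:ℝ)..t, g (ωp s) := by
    intro t h0 ht
    have hGω : ContinuousOn (fun s => G (ωp s)) (uIcc 0 t) := by
      apply hGc.comp_continuousOn
      intro x hx
      exact (hωpc x (lt_of_le_of_lt ((uIcc_of_le h0 ▸ hx : x ∈ Icc 0 t)).2 ht)).continuousWithinAt
    have h1 : ∫ s in (0:ℝ)..t, G (ωp s) = ωp t - ωp 0 := by
      refine intervalIntegral.integral_eq_sub_of_hasDerivAt (fun x hx => ?_)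
        (hGω.intervalIntegrable)
      exact hωpderiv x (lt_of_le_of_lt ((uIcc_of_le h0 ▸ hx : x ∈ Icc 0 t)).2 ht)
    have h2 : ∫ s in (0:ℝ)..t, G (ωp s) = ∫ s in (0:ℝ)..t, g (ωp s) := by
      refine intervalIntegral.integral_congr fun σ hσ => ?_
      rw [uIcc_of_le h0] at hσ
      exact hGg _ (hωpnn σ hσ.1 (lt_of_le_of_lt hσ.2 ht))
    rw [← h2, h1, hωp0, sub_zero]
  -- basic properties of the iterates
  have hA : ∀ n, (∀ s, 0 ≤ s → 0 ≤ ωseq n s) ∧ ContinuousOn (ωseq n) (Ici 0) ∧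
      MonotoneOn (ωseq n) (Ici 0) := by
    intro n
    induction n with
    | zero =>
      refine ⟨fun s _ => by simp [hω0], by rw [hω0]; exact continuousOn_const, ?_⟩
      intro a _ b _ _
      simp [hω0]
    | succ n ih =>
      obtain ⟨hnn, hcont, hmono⟩ := ih
      have hmaps : MapsTo (ωseq n) (Ici 0) (Ici 0) := fun s hs => hnn s hs
      have hfc : ContinuousOn (fun s => g (ωseq n s)) (Ici 0) := hgc.comp hcont hmaps
      have hftc : Continuous fun s => g (ωseq n (max s 0)) := by
        refine hfc.comp_continuous (continuous_id.max continuous_const) fun x => Set.mem_Ici.2 (le_max_right _ _)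
      have hfeq : ∀ t, 0 ≤ t →
          (∫ s in (0:ℝ)..t, g (ωseq n s)) = ∫ s in (0:ℝ)..t, g (ωseq n (max s 0)) := by
        intro t ht
        refine intervalIntegral.integral_congr fun σ hσ => ?_
        rw [uIcc_of_le ht] at hσ
        rw [max_eq_left hσ.1]
      have hint : ∀ a b : ℝ, IntervalIntegrable (fun s => g (ωseq n (max s 0))) volume a b :=
        fun a b => hftc.intervalIntegrable a b
      refine ⟨?_, ?_, ?_⟩
      · intro s hs
        rw [hωrec]
        exact intervalIntegral.integral_nonneg hs fun u hu => (hgpos _ (hnn u hu.1)).le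
      · have hP : Continuous fun t => ∫ s in (0:ℝ)..t, g (ωseq n (max s 0)) := by
          exact continuous_iff_continuousAt.2 fun t =>
            (intervalIntegral.integral_hasDerivAt_right (hint 0 t)
              hftc.aestronglyMeasurable.stronglyMeasurableAtFilter hftc.continuousAt).continuousAt
        refine ContinuousOn.congr hP.continuousOn fun t ht => ?_
        rw [hωrec n t, hfeq t ht]
      · intro a ha b hb hab
        rw [hωrec, hωrec, hfeq a ha, hfeq b hb, ← sub_nonneg,
          intervalIntegral.integral_interval_sub_left (hint 0 b) (hint 0 a)]
        refine intervalIntegral.integral_nonneg hab fun u hu => ?_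
        exact (hgpos _ (hnn _ (le_max_right _ _))).le
  -- iterates are pointwise monotone in n
  have hB : ∀ n, ∀ s, 0 ≤ s → ωseq n s ≤ ωseq (n + 1) s := by
    intro n
    induction n with
    | zero =>
      intro s hs
      rw [hω0]
      exact (hA 1).1 s hs
    | succ n ih =>
      intro s hs
      rw [hωrec, hωrec]
      have h1 : ContinuousOn (fun u => g (ωseq n u)) (Icc 0 s) :=
        (hgc.comp (hA n).2.1 fun u hu => (hA n).1 u hu).mono Icc_subset_Ici_self
      have h2 : ContinuousOn (fun u => g (ωseq (n+1) u)) (Icc 0 s) :=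
        (hgc.comp (hA (n+1)).2.1 fun u hu => (hA (n+1)).1 u hu).mono Icc_subset_Ici_self
      refine intervalIntegral.integral_mono_on hs
        (h1.intervalIntegrable_of_Icc hs) (h2.intervalIntegrable_of_Icc hs) fun u hu => ?_
      exact hgm ((hA n).1 u hu.1) ((hA (n+1)).1 u hu.1) (ih u hu.1)
  -- iterates are bounded by ωp
  have hC : ∀ n, ∀ t, 0 ≤ t → t < Tplus → ωseq n t ≤ ωp t := by
    intro n
    induction n with
    | zero =>
      intro t h0 ht
      rw [hω0]
      exact hωpnn t h0 ht
    | succ n ih =>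
      intro t h0 ht
      rw [hωrec, hωpint t h0 ht]
      have h1 : ContinuousOn (fun u => g (ωseq n u)) (Icc 0 t) :=
        (hgc.comp (hA n).2.1 fun u hu => (hA n).1 u hu).mono Icc_subset_Ici_self
      have h2 : ContinuousOn (fun u => g (ωp u)) (Icc 0 t) := by
        refine hgc.comp ?_ fun u hu => hωpnn u hu.1 (lt_of_le_of_lt hu.2 ht)
        intro u hu
        exact (hωpc u (lt_of_le_of_lt hu.2 ht)).continuousWithinAt
      refine intervalIntegral.integral_mono_on h0
        (h1.intervalIntegrable_of_Icc h0) (h2.intervalIntegrable_of_Icc h0) fun u hu => ?_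
      have hu' : u < Tplus := lt_of_le_of_lt hu.2 ht
      exact hgm ((hA n).1 u hu.1) (hωpnn u hu.1 hu') (ih u hu.1 hu')
  -- the limit of the iterates
  have hz : ∀ n, ωseq n 0 = 0 := by
    intro n
    cases n with
    | zero => simp [hω0]
    | succ n => rw [hωrec]; exact intervalIntegral.integral_same
  set L : ℝ → ℝ := fun t => ⨆ n, ωseq n t with hLdef
  have hbdd : ∀ t, 0 ≤ t → t < Tplus → BddAbove (range fun n => ωseq n t) := by
    intro t h0 ht
    exact ⟨ωp t, forall_mem_range.2 fun n => hC n t h0 ht⟩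
  have hLtend : ∀ t, 0 ≤ t → t < Tplus → Tendsto (fun n => ωseq n t) atTop (𝓝 (L t)) := by
    intro t h0 ht
    exact tendsto_atTop_ciSup (monotone_nat_of_le_succ fun n => hB n t h0) (hbdd t h0 ht)
  have hLge : ∀ n, ∀ t, 0 ≤ t → t < Tplus → ωseq n t ≤ L t := by
    intro n t h0 ht
    exact le_ciSup (hbdd t h0 ht) n
  have hLle : ∀ t, 0 ≤ t → t < Tplus → L t ≤ ωp t := by
    intro t h0 ht
    exact ciSup_le fun n => hC n t h0 ht
  have hLnn : ∀ t, 0 ≤ t → t < Tplus → 0 ≤ L t := by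
    intro t h0 ht
    have := hLge 0 t h0 ht
    rw [hω0] at this
    exact this
  have hLmono : ∀ s t, 0 ≤ s → s ≤ t → t < Tplus → L s ≤ L t := by
    intro s t h0 hst ht
    refine ciSup_le fun n => le_trans ?_ (hLge n t (h0.trans hst) ht)
    exact (hA n).2.2 h0 (h0.trans hst) hst
  have hL0 : L 0 = 0 := by
    refine le_antisymm (ciSup_le fun n => (hz n).le) ?_
    have := hLge 0 0 le_rfl hTpos
    rw [hω0] at this
    exact this
  -- the integral equation for L
  have hLint : ∀ t, 0 ≤ t → t < Tplus → L t = ∫ s in (0:ℝ)..t, g (L s) := by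
    intro t h0 ht
    have h2 : Tendsto (fun n => ∫ s in (0:ℝ)..t, g (ωseq n s)) atTop
        (𝓝 (∫ s in (0:ℝ)..t, g (L s))) := by
      refine intervalIntegral.tendsto_integral_filter_of_dominated_convergence
        (fun _ => g (ωp t)) ?_ ?_ ?_ ?_
      · refine Eventually.of_forall fun n => ?_
        rw [uIoc_of_le h0]
        refine ContinuousOn.aestronglyMeasurable ?_ measurableSet_Ioc
        exact (hgc.comp (hA n).2.1 fun u hu => (hA n).1 u hu).mono
          (fun u hu => le_of_lt hu.1)
      · refine Eventually.of_forall fun n => Eventually.of_forall fun x hx => ?_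
        rw [uIoc_of_le h0] at hx
        have hx0 : (0:ℝ) ≤ x := hx.1.le
        have hxT : x < Tplus := lt_of_le_of_lt hx.2 ht
        rw [Real.norm_of_nonneg (hgpos _ ((hA n).1 x hx0)).le]
        refine hgm ((hA n).1 x hx0) (hωpnn t h0 ht) ?_
        exact le_trans (hC n x hx0 hxT) (hωpmono x t hx.2 ht)
      · exact intervalIntegrable_const
      · refine Eventually.of_forall fun x hx => ?_
        rw [uIoc_of_le h0] at hx
        have hx0 : (0:ℝ) ≤ x := hx.1.le
        have hxT : x < Tplus := lt_of_le_of_lt hx.2 ht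
        have htd : Tendsto (fun n => ωseq n x) atTop (𝓝[Ici 0] (L x)) := by
          refine tendsto_nhdsWithin_of_tendsto_nhds_of_eventually_within _
            (hLtend x hx0 hxT) (Eventually.of_forall fun n => (hA n).1 x hx0)
        exact ((hgc (L x) (hLnn x hx0 hxT)).tendsto.comp htd)
    have h3 : Tendsto (fun n => ωseq (n+1) t) atTop (𝓝 (L t)) :=
      (hLtend t h0 ht).comp (tendsto_add_atTop_nat 1)
    simp_rw [hωrec] at h3
    exact tendsto_nhds_unique h3 h2
  -- continuity of L
  have hLcont : ∀ c, 0 ≤ c → c < Tplus → ContinuousOn L (Icc 0 c) := by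
    intro c hc0 hc
    have hmonoL : MonotoneOn (fun s => g (L s)) (Icc 0 c) := by
      intro a ha b hb hab
      exact hgm (hLnn a ha.1 (lt_of_le_of_lt ha.2 hc)) (hLnn b hb.1 (lt_of_le_of_lt hb.2 hc))
        (hLmono a b ha.1 hab (lt_of_le_of_lt hb.2 hc))
    have hintL : IntegrableOn (fun s => g (L s)) (uIcc 0 c) := by
      rw [uIcc_of_le hc0]
      exact (hmonoL.integrableOn_isCompact isCompact_Icc)
    have := intervalIntegral.continuousOn_primitive_interval hintL
    rw [uIcc_of_le hc0] at this
    exact this.congr fun x hx => hLint x hx.1 (lt_of_le_of_lt hx.2 hc)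
  -- identification of L with ωp
  have hkey : ∀ t, 0 ≤ t → t < Tplus → L t = ωp t := by
    intro t h0 ht
    obtain ⟨c, hc1, hc2⟩ := exists_between ht
    have hc0 : (0:ℝ) ≤ c := h0.trans hc1.le
    have hLc := hLcont c hc0 hc2
    have hgL : ContinuousOn (fun s => g (L s)) (Icc 0 c) :=
      hgc.comp hLc fun u hu => hLnn u hu.1 (lt_of_le_of_lt hu.2 hc2)
    have hmemIcc : ∀ x, x ∈ Ico 0 c → Icc 0 c ∈ 𝓝[Ici x] x := by
      intro x hx
      refine mem_nhdsWithin.2 ⟨Iio c, isOpen_Iio, hx.2, ?_⟩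
      intro y hy
      exact ⟨hx.1.trans hy.2, hy.1.le⟩
    have hLderiv : ∀ x ∈ Ico 0 c, HasDerivWithinAt L (g (L x)) (Ici x) x := by
      intro x hx
      have hxIcc : x ∈ Icc 0 c := ⟨hx.1, hx.2.le⟩
      have hprim : HasDerivWithinAt (fun u => ∫ s in (0:ℝ)..u, g (L s)) (g (L x)) (Ici x) x := by
        refine intervalIntegral.integral_hasDerivWithinAt_right ?_ ?_ ?_
        · refine ((hgL.mono ?_).intervalIntegrable_of_Icc hx.1)
          exact Icc_subset_Icc le_rfl hx.2.le
        · exact ⟨Icc 0 c, (nhdsWithin_mono x Ioi_subset_Ici_self) (hmemIcc x hx),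
            hgL.aestronglyMeasurable measurableSet_Icc⟩
        · exact (hgL x hxIcc).mono_of_mem_nhdsWithin
            ((nhdsWithin_mono x Ioi_subset_Ici_self) (hmemIcc x hx))
      refine hprim.congr_of_eventuallyEq ?_ (hLint x hx.1 (hx.2.trans hc2))
      filter_upwards [self_mem_nhdsWithin, hmemIcc x hx] with y hy1 hy2
      exact hLint y hy2.1 (lt_of_le_of_lt hy2.2 hc2)
    have hFL : ∀ x ∈ Ico 0 c, HasDerivWithinAt (fun u => F (L u)) ((fun _ => (1:ℝ)) x) (Ici x) x := by
      intro x hx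
      have hLx : 0 ≤ L x := hLnn x hx.1 (hx.2.trans hc2)
      have h1 := (hFderiv (L x)).comp_hasDerivWithinAt x (hLderiv x hx)
      have h2 : 1 / G (L x) * g (L x) = 1 := by
        rw [hGg _ hLx]
        field_simp [(hgpos _ hLx).ne']
      rwa [h2] at h1
    have he : ∀ y ∈ Icc 0 c, F (L y) = y := by
      refine eq_of_has_deriv_right_eq hFL (fun x _ => hasDerivWithinAt_id x (Ici x))
        (hFc.comp_continuousOn hLc) continuousOn_id ?_
      rw [hL0, hF0]
    have hFLt : F (L t) = t := he t ⟨h0, hc1.le⟩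
    exact hFsm.injective (hFLt.trans (hωpF t ht).symm)
  -- conclusion
  refine ⟨ωp, ?_, ?_, hωp0, ?_, ?_, ?_⟩
  · intro a ha b hb hab
    exact hωpmono a b hab hb.2
  · intro t ht
    exact hωpnn t ht.1 ht.2
  · intro t ht
    have h1 := (hωpderiv t ht.2).hasDerivWithinAt (s := Set.Ico 0 Tplus)
    rwa [hGg _ (hωpnn t ht.1 ht.2)] at h1
  · intro t ht
    rw [← hkey t ht.1 ht.2]
    exact hLtend t ht.1 ht.2
  · rw [tendsto_atTop]
    intro b
    filter_upwards [self_mem_nhdsWithin,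
      mem_nhdsWithin_of_mem_nhds (Ioi_mem_nhds (hFlt b))] with y hy1 hy2
    have : F b < F (ωp y) := by
      rw [hωpF y hy1]
      exact hy2
    exact (hFsm.lt_iff_lt.1 this).le
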